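/- The family of multiplicatively piecewise syndetic subsets of ℕ is strongly partition regular: if A is multiplicatively piecewise syndetic and A = C₁ ∪ … ∪ C_r, then some Cᵢ is multiplicatively piecewise syndetic. -/
import Mathlib


def MulThick (T : Set ℕ) : Prop :=
  ∀ F : Finset ℕ, (∀ f ∈ F, 0 < f) → ∃ x : ℕ, 0 < x ∧ ∀ f ∈ F, x * f ∈ T

def MulSyndetic (A : Set ℕ) : Prop :=
  ∃ k : ℕ, 0 < k ∧ ∀ x : ℕ, 0 < x → ∃ i : ℕ, 1 ≤ i ∧ i ≤ k ∧ x * i ∈ A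

/-- `A` is multiplicatively piecewise syndetic: it is the intersection of a
multiplicatively syndetic set with a multiplicatively thick set. -/
def MulPiecewiseSyndetic (A : Set ℕ) : Prop :=
  ∃ S T : Set ℕ, MulSyndetic S ∧ MulThick T ∧ A = S ∩ T

/-- The set of `x` some bounded multiple of which lies in `A`. -/
def Bset (k : ℕ) (A : Set ℕ) : Set ℕ := {x | ∃ i : ℕ, 1 ≤ i ∧ i ≤ k ∧ x * i ∈ A}

lemma ps_of_subset {S T A : Set ℕ} (hS : MulSyndetic S) (hT : MulThick T)
    (h : S ∩ T ⊆ A) : MulPiecewiseSyndetic A := by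
  refine ⟨S ∪ A, T ∪ A, ?_, ?_, ?_⟩
  · obtain ⟨k, hk, hsyn⟩ := hS
    refine ⟨k, hk, fun x hx => ?_⟩
    obtain ⟨i, h1, h2, h3⟩ := hsyn x hx
    exact ⟨i, h1, h2, Or.inl h3⟩
  · intro F hF
    obtain ⟨x, hx, hxF⟩ := hT F hF
    exact ⟨x, hx, fun f hf => Or.inl (hxF f hf)⟩
  · ext n
    constructor
    · intro hn; exact ⟨Or.inr hn, Or.inr hn⟩
    · rintro ⟨hs | ha, ht | ha'⟩
      · exact h ⟨hs, ht⟩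
      · exact ha'
      · exact ha
      · exact ha

lemma thick_Bset_of_ps {A : Set ℕ} (h : MulPiecewiseSyndetic A) :
    ∃ k, 0 < k ∧ MulThick (Bset k A) := by
  obtain ⟨S, T, ⟨k, hk, hsyn⟩, hT, rfl⟩ := h
  refine ⟨k, hk, fun F hF => ?_⟩
  set F' := (F ×ˢ Finset.Icc 1 k).image (fun p => p.1 * p.2) with hF'def
  have hF' : ∀ g ∈ F', 0 < g := by
    intro g hg
    simp only [hF'def, Finset.mem_image, Finset.mem_product, Finset.mem_Icc] at hg
    obtain ⟨⟨a, b⟩, ⟨ha, hb1, hb2⟩, rfl⟩ := hg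
    exact Nat.mul_pos (hF a ha) hb1
  obtain ⟨x, hx, hxT⟩ := hT F' hF'
  refine ⟨x, hx, fun f hf => ?_⟩
  obtain ⟨i, h1, h2, h3⟩ := hsyn (x * f) (Nat.mul_pos hx (hF f hf))
  refine ⟨i, h1, h2, h3, ?_⟩
  have hmem : f * i ∈ F' := by
    simp only [hF'def, Finset.mem_image, Finset.mem_product, Finset.mem_Icc]
    exact ⟨⟨f, i⟩, ⟨hf, h1, h2⟩, rfl⟩
  have := hxT (f * i) hmem
  rwa [← mul_assoc] at this

lemma ps_of_thick_Bset {A : Set ℕ} {k : ℕ} (hk : 0 < k) (h : MulThick (Bset k A)) :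
    MulPiecewiseSyndetic A := by
  refine ps_of_subset (S := A ∪ (Bset k A)ᶜ) (T := Bset k A) ?_ h ?_
  · refine ⟨k, hk, fun x hx => ?_⟩
    by_cases hxB : x ∈ Bset k A
    · obtain ⟨i, h1, h2, h3⟩ := hxB
      exact ⟨i, h1, h2, Or.inl h3⟩
    · exact ⟨1, le_refl 1, hk, Or.inr (by simpa using hxB)⟩
  · rintro n ⟨ha | hnb, hb⟩
    · exact ha
    · exact absurd hb hnb

lemma two_cell {A C D : Set ℕ} (hA : MulPiecewiseSyndetic A) (hsub : A ⊆ C ∪ D)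
    (hC : ¬ MulPiecewiseSyndetic C) : MulPiecewiseSyndetic D := by
  obtain ⟨k, hk, hthick⟩ := thick_Bset_of_ps hA
  have hCt : ¬ MulThick (Bset k C) := fun h => hC (ps_of_thick_Bset hk h)
  unfold MulThick at hCt
  push_neg at hCt
  obtain ⟨F, hFpos, hFfail⟩ := hCt
  -- F is nonempty
  obtain ⟨f₀, hf₀, _⟩ := hFfail 1 one_pos
  set M := F.sup id with hM
  have hM1 : 1 ≤ M := le_trans (hFpos f₀ hf₀) (Finset.le_sup (f := id) hf₀)
  apply ps_of_thick_Bset (k := k * M) (Nat.mul_pos hk hM1)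
  intro E hE
  set E' := (E ×ˢ F).image (fun p => p.1 * p.2) with hE'def
  have hE' : ∀ g ∈ E', 0 < g := by
    intro g hg
    simp only [hE'def, Finset.mem_image, Finset.mem_product] at hg
    obtain ⟨⟨a, b⟩, ⟨ha, hb⟩, rfl⟩ := hg
    exact Nat.mul_pos (hE a ha) (hFpos b hb)
  obtain ⟨x, hx, hxA⟩ := hthick E' hE'
  refine ⟨x, hx, fun e he => ?_⟩
  obtain ⟨f, hf, hfnot⟩ := hFfail (x * e) (Nat.mul_pos hx (hE e he))
  have hef : e * f ∈ E' := by
    simp only [hE'def, Finset.mem_image, Finset.mem_product]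
    exact ⟨⟨e, f⟩, ⟨he, hf⟩, rfl⟩
  obtain ⟨i, hi1, hi2, hiA⟩ := hxA (e * f) hef
  -- x * (e * f) * i ∈ A ⊆ C ∪ D, and it is not in C
  have hnotC : x * (e * f) * i ∉ C := by
    intro hmem
    exact hfnot ⟨i, hi1, hi2, by rwa [show x * e * f * i = x * (e * f) * i by ring]⟩
  have hD : x * (e * f) * i ∈ D := (hsub hiA).resolve_left hnotC
  refine ⟨f * i, Nat.one_le_iff_ne_zero.mpr (Nat.mul_ne_zero
      (Nat.one_le_iff_ne_zero.mp (hFpos f hf)) (Nat.one_le_iff_ne_zero.mp hi1)), ?_, ?_⟩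
  · calc f * i ≤ M * k := Nat.mul_le_mul (Finset.le_sup (f := id) hf) hi2
    _ = k * M := Nat.mul_comm M k
  · rwa [show x * e * (f * i) = x * (e * f) * i by ring]

lemma main_aux : ∀ (r : ℕ) (C : Fin r → Set ℕ) (A : Set ℕ), MulPiecewiseSyndetic A →
    A ⊆ ⋃ i, C i → ∃ i, MulPiecewiseSyndetic (C i) := by
  intro r
  induction r with
  | zero =>
    intro C A hA hsub
    exfalso
    obtain ⟨k, hk, ht⟩ := thick_Bset_of_ps hA
    obtain ⟨x, hx, hxf⟩ := ht {1} (by simp)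
    obtain ⟨i, _, _, hmem⟩ := hxf 1 (Finset.mem_singleton_self 1)
    have := hsub hmem
    simp only [Set.mem_iUnion] at this
    obtain ⟨j, _⟩ := this
    exact j.elim0
  | succ r ih =>
    intro C A hA hsub
    by_cases h0 : MulPiecewiseSyndetic (C 0)
    · exact ⟨0, h0⟩
    · have hD : MulPiecewiseSyndetic (⋃ i : Fin r, C i.succ) := by
        refine two_cell hA ?_ h0
        intro n hn
        obtain ⟨i, hi⟩ := Set.mem_iUnion.mp (hsub hn)
        rcases Fin.eq_zero_or_eq_succ i with h | ⟨j, rfl⟩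
        · left; rwa [h] at hi
        · right; exact Set.mem_iUnion.mpr ⟨j, hi⟩
      obtain ⟨i, hi⟩ := ih (fun i => C i.succ) _ hD subset_rfl
      exact ⟨i.succ, hi⟩

/-- Strong partition regularity of multiplicatively piecewise syndetic sets. -/
theorem mulPiecewiseSyndetic_strongly_partition_regular
    (A : Set ℕ) (hA : MulPiecewiseSyndetic A) (r : ℕ) (C : Fin r → Set ℕ)
    (hcover : A = ⋃ i, C i)
    (hdisj : ∀ i j, i ≠ j → C i ∩ C j = ∅) :
    ∃ i, MulPiecewiseSyndetic (C i) := by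
  exact main_aux r C A hA (le_of_eq hcover)
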